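/- Assume the reduced spherically symmetric vacuum system (i)–(iv) holds on I, and let c₁ ≠ 0 denote the constant value of (Eρ²/(rB²))·(A²/(r²E²) − 1). Then the function r ↦ (c₁/c_e)·(c_e r B(r)²/(E(r)ρ(r)²) − r⁴B(r)⁴) is constant on I; denoting its value by c₃, one has E(r)ρ(r)² = c₁ c_e r B(r)² / (c₁ r⁴ B(r)⁴ + c₃ c_e) for all r ∈ I. -/

import Mathlib

open Real Filter Topology Set

/-- The reduced spherically symmetric vacuum system (i)–(iv) on the open interval `(a,b) ⊆ (0,∞)`,
for positive differentiable `A, B, E, ρ` with constants `c₀`, `c_e > 0` and `r²E² ≠ A²`. -/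
def ReducedVacuumSystem (a b : ℝ) (A B E ρ : ℝ → ℝ) (c₀ c_e : ℝ) : Prop :=
  0 ≤ a ∧ 0 < c_e ∧
  (∀ r ∈ Set.Ioo a b, DifferentiableAt ℝ A r) ∧
  (∀ r ∈ Set.Ioo a b, DifferentiableAt ℝ B r) ∧
  (∀ r ∈ Set.Ioo a b, DifferentiableAt ℝ E r) ∧
  (∀ r ∈ Set.Ioo a b, DifferentiableAt ℝ ρ r) ∧
  (∀ r ∈ Set.Ioo a b, 0 < A r) ∧
  (∀ r ∈ Set.Ioo a b, 0 < B r) ∧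
  (∀ r ∈ Set.Ioo a b, 0 < E r) ∧
  (∀ r ∈ Set.Ioo a b, 0 < ρ r) ∧
  (∀ r ∈ Set.Ioo a b, r ^ 2 * E r ^ 2 ≠ A r ^ 2) ∧
  -- (i)  A'/A = c₀ r B E
  (∀ r ∈ Set.Ioo a b, deriv A r / A r = c₀ * r * B r * E r) ∧
  -- (ii) (rE)'/(rE) = −(2/c_e) r² B² E ρ² + c₀ r B E
  (∀ r ∈ Set.Ioo a b, deriv (fun s => s * E s) r / (r * E r)
      = -(2 / c_e) * r ^ 2 * B r ^ 2 * E r * ρ r ^ 2 + c₀ * r * B r * E r) ∧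
  -- (iii) (rB)'/(rB) = −(1/r)·A²/(r²E² − A²)
  (∀ r ∈ Set.Ioo a b, deriv (fun s => s * B s) r / (r * B r)
      = -(1 / r) * A r ^ 2 / (r ^ 2 * E r ^ 2 - A r ^ 2)) ∧
  -- (iv) ρ'/ρ = −(A²/(r²E² − A²))·(1/r − (2/c_e) r² B² E ρ²) − (1/2)·(rE)'/(rE)
  (∀ r ∈ Set.Ioo a b, deriv ρ r / ρ r
      = -(A r ^ 2 / (r ^ 2 * E r ^ 2 - A r ^ 2))
          * (1 / r - (2 / c_e) * r ^ 2 * B r ^ 2 * E r * ρ r ^ 2)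
        - (1 / 2) * (deriv (fun s => s * E s) r / (r * E r)))

/-- If the reduced spherically symmetric vacuum system (i)–(iv) holds on
`I = (a,b)` and `c₁ ≠ 0` is the constant value of `(Eρ²/(rB²))·(A²/(r²E²) − 1)`, then
`r ↦ (c₁/c_e)·(c_e r B²/(Eρ²) − r⁴B⁴)` is constant on `I`; denoting its value by `c₃`,
one has `Eρ² = c₁ c_e r B² / (c₁ r⁴ B⁴ + c₃ c_e)` on `I`. -/
theorem Erho2_algebraic_formula
    (a b : ℝ) (A B E ρ : ℝ → ℝ) (c₀ c_e c₁ : ℝ)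
    (hsys : ReducedVacuumSystem a b A B E ρ c₀ c_e)
    (hc₁ : ∀ r ∈ Set.Ioo a b,
      E r * ρ r ^ 2 / (r * B r ^ 2) * (A r ^ 2 / (r ^ 2 * E r ^ 2) - 1) = c₁)
    (hc₁ne : c₁ ≠ 0) :
    ∃ c₃ : ℝ,
      (∀ r ∈ Set.Ioo a b,
        c₁ / c_e * (c_e * r * B r ^ 2 / (E r * ρ r ^ 2) - r ^ 4 * B r ^ 4) = c₃) ∧
      (∀ r ∈ Set.Ioo a b,
        E r * ρ r ^ 2 = c₁ * c_e * r * B r ^ 2 / (c₁ * r ^ 4 * B r ^ 4 + c₃ * c_e)) := by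
  obtain ⟨ha, hce, hdA, hdB, hdE, hdρ, hA0, hB0, hE0, hρ0, hne, h1, h2, h3, h4⟩ := hsys
  set F : ℝ → ℝ := fun s => c₁ / c_e * (c_e * s * B s ^ 2 / (E s * ρ s ^ 2) - s ^ 4 * B s ^ 4)
    with hFdef
  have key : ∀ r ∈ Set.Ioo a b, HasDerivAt F 0 r := by
    intro r hr
    have hr0 : 0 < r := lt_of_le_of_lt ha hr.1
    have hrne : r ≠ 0 := ne_of_gt hr0
    have hBne : B r ≠ 0 := ne_of_gt (hB0 r hr)
    have hEne : E r ≠ 0 := ne_of_gt (hE0 r hr)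
    have hρne : ρ r ≠ 0 := ne_of_gt (hρ0 r hr)
    have hcene : c_e ≠ 0 := ne_of_gt hce
    have hD : r ^ 2 * E r ^ 2 - A r ^ 2 ≠ 0 := sub_ne_zero.mpr (hne r hr)
    have hBd := hdB r hr; have hEd := hdE r hr; have hρd := hdρ r hr
    have hsB : HasDerivAt (fun s => s * B s) (1 * B r + r * deriv B r) r :=
      (hasDerivAt_id r).mul hBd.hasDerivAt
    have hsBd : deriv (fun s => s * B s) r = B r + r * deriv B r := by
      rw [hsB.deriv]; ring
    have hsE : HasDerivAt (fun s => s * E s) (1 * E r + r * deriv E r) r :=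
      (hasDerivAt_id r).mul hEd.hasDerivAt
    have hsEd : deriv (fun s => s * E s) r = E r + r * deriv E r := by
      rw [hsE.deriv]; ring
    have hbB : deriv B r
        = ((-(1 / r) * A r ^ 2 / (r ^ 2 * E r ^ 2 - A r ^ 2)) * (r * B r) - B r) / r := by
      have h := h3 r hr
      rw [hsBd, div_eq_iff (mul_ne_zero hrne hBne)] at h
      rw [eq_div_iff hrne]
      linear_combination h
    have hbE : deriv E r
        = ((-(2 / c_e) * r ^ 2 * B r ^ 2 * E r * ρ r ^ 2 + c₀ * r * B r * E r) * (r * E r)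
            - E r) / r := by
      have h := h2 r hr
      rw [hsEd, div_eq_iff (mul_ne_zero hrne hEne)] at h
      rw [eq_div_iff hrne]
      linear_combination h
    have hbρ : deriv ρ r = (-(A r ^ 2 / (r ^ 2 * E r ^ 2 - A r ^ 2))
            * (1 / r - (2 / c_e) * r ^ 2 * B r ^ 2 * E r * ρ r ^ 2)
          - (1 / 2) * (-(2 / c_e) * r ^ 2 * B r ^ 2 * E r * ρ r ^ 2 + c₀ * r * B r * E r))
          * ρ r := by
      have h := h4 r hr
      rw [h2 r hr, div_eq_iff hρne] at h
      exact h
    have hden : E r * ρ r ^ 2 ≠ 0 := mul_ne_zero hEne (pow_ne_zero 2 hρne)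
    have hG : HasDerivAt (fun s => c_e * s * B s ^ 2 / (E s * ρ s ^ 2))
        ((((c_e * 1) * B r ^ 2 + (c_e * r) * ((2 : ℕ) * B r ^ 1 * deriv B r)) * (E r * ρ r ^ 2)
          - (c_e * r * B r ^ 2) * (deriv E r * ρ r ^ 2 + E r * ((2 : ℕ) * ρ r ^ 1 * deriv ρ r)))
          / (E r * ρ r ^ 2) ^ 2) r :=
      HasDerivAt.div (((hasDerivAt_id r).const_mul c_e).mul (hBd.hasDerivAt.pow 2))
        (hEd.hasDerivAt.mul (hρd.hasDerivAt.pow 2)) hden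
    have hH : HasDerivAt (fun s => s ^ 4 * B s ^ 4)
        (((4 : ℕ) * r ^ 3) * B r ^ 4 + r ^ 4 * ((4 : ℕ) * B r ^ 3 * deriv B r)) r :=
      (hasDerivAt_pow 4 r).mul (hBd.hasDerivAt.pow 4)
    have hF := (hG.sub hH).const_mul (c₁ / c_e)
    convert hF using 1
    rotate_left 3
    rw [hbB, hbE, hbρ]
    field_simp
    ring
    all_goals rfl
  by_cases hab : a < b
  · have hr₀ : (a + b) / 2 ∈ Set.Ioo a b := ⟨by linarith, by linarith⟩
    set r₀ := (a + b) / 2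
    refine ⟨F r₀, ?_, ?_⟩
    · intro r hr
      show F r = F r₀
      exact (convex_Ioo a b).is_const_of_fderivWithin_eq_zero
        (fun z hz => ((key z hz).differentiableAt).differentiableWithinAt)
        (fun z hz => by
          rw [fderivWithin_of_isOpen isOpen_Ioo hz, (key z hz).hasFDerivAt.fderiv]
          ext x
          simp) hr hr₀
    · intro r hr
      have hFr : F r = F r₀ :=
        (convex_Ioo a b).is_const_of_fderivWithin_eq_zero
          (fun z hz => ((key z hz).differentiableAt).differentiableWithinAt)
          (fun z hz => by
            rw [fderivWithin_of_isOpen isOpen_Ioo hz, (key z hz).hasFDerivAt.fderiv]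
            ext x
            simp) hr hr₀
      have hr0 : 0 < r := lt_of_le_of_lt ha hr.1
      have hrne : r ≠ 0 := ne_of_gt hr0
      have hBne : B r ≠ 0 := ne_of_gt (hB0 r hr)
      have hEne : E r ≠ 0 := ne_of_gt (hE0 r hr)
      have hρne : ρ r ≠ 0 := ne_of_gt (hρ0 r hr)
      have hcene : c_e ≠ 0 := ne_of_gt hce
      have hden : E r * ρ r ^ 2 ≠ 0 := mul_ne_zero hEne (pow_ne_zero 2 hρne)
      have key2 : c₁ * r ^ 4 * B r ^ 4 + F r₀ * c_e
          = c₁ * c_e * r * B r ^ 2 / (E r * ρ r ^ 2) := by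
        rw [← hFr]
        simp only [hFdef]
        field_simp
        ring
      have hXne : c₁ * c_e * r * B r ^ 2 / (E r * ρ r ^ 2) ≠ 0 :=
        div_ne_zero (mul_ne_zero (mul_ne_zero (mul_ne_zero hc₁ne hcene) hrne)
          (pow_ne_zero 2 hBne)) hden
      have hdne : c₁ * r ^ 4 * B r ^ 4 + F r₀ * c_e ≠ 0 := by rw [key2]; exact hXne
      rw [eq_div_iff hdne, key2]
      field_simp
  · refine ⟨0, ?_, ?_⟩ <;> intro r hr <;>
      exact absurd hr (by simp [Set.Ioo_eq_empty hab])
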